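/- The solutions of the A₁ quantum Q-system satisfy the linear recursion Q_{n+1} + t·Q_{n−1} = (Q_1·Q_0^{−1} + t·Q_{−1}·Q_0^{−1})·Q_n for all n ∈ ℤ; in other words, the element Q_1 Q_0^{−1} + t Q_{−1} Q_0^{−1} acts as a conserved quantity of the recursion. -/

import Mathlib

/-!
# Statement 8: linear recursion for the A₁ quantum Q-system

`Q_{n+1} + t Q_{n−1} = (Q_1 Q_0⁻¹ + t Q_{−1} Q_0⁻¹) Q_n` for all `n ∈ ℤ`.
-/

theorem A1_quantum_Qsystem_linear_recursion
    {R : Type*} [Ring R]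
    -- `t` is a central unit of `R`:
    (t : Rˣ) (hcentral : ∀ x : R, (t : R) * x = x * (t : R))
    -- the `Q_n` are invertible elements of `R`:
    (Q : ℤ → R) (hunit : ∀ n, IsUnit (Q n))
    -- satisfying the A₁ quantum Q-system:
    (hsys : ∀ n : ℤ, (t : R) * (Q (n + 1) * Q (n - 1)) = Q n ^ 2 - 1)
    -- and the commutation relations:
    (hcomm : ∀ n : ℤ, Q n * Q (n + 1) = (t : R) * (Q (n + 1) * Q n)) :
    ∀ n : ℤ,
      Q (n + 1) + (t : R) * Q (n - 1) =
        (Q 1 * Ring.inverse (Q 0) + (t : R) * (Q (-1) * Ring.inverse (Q 0))) * Q n := by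
  set i : ℤ → R := fun m => Ring.inverse (Q m) with hidef
  have hQi : ∀ m, Q m * i m = 1 := fun m => Ring.mul_inverse_cancel _ (hunit m)
  have hiQ : ∀ m, i m * Q m = 1 := fun m => Ring.inverse_mul_cancel _ (hunit m)
  have htt : ((t⁻¹ : Rˣ) : R) * (t : R) = 1 := t.inv_mul
  have htt' : (t : R) * ((t⁻¹ : Rˣ) : R) = 1 := t.mul_inv
  have hc' : ∀ x : R, ((t⁻¹ : Rˣ) : R) * x = x * ((t⁻¹ : Rˣ) : R) := by
    intro x
    have h1 : ((t⁻¹ : Rˣ) : R) * ((t : R) * x) * ((t⁻¹ : Rˣ) : R)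
        = x * ((t⁻¹ : Rˣ) : R) := by
      rw [← mul_assoc, htt, one_mul]
    rw [hcentral x] at h1
    rw [← h1]
    simp [mul_assoc, htt']
  have hswap : ∀ x y : R, x * ((t : R) * y) = (t : R) * (x * y) := by
    intro x y
    rw [← mul_assoc, ← hcentral, mul_assoc]
  have hswap' : ∀ x y : R, x * (((t⁻¹ : Rˣ) : R) * y) = ((t⁻¹ : Rˣ) : R) * (x * y) := by
    intro x y
    rw [← mul_assoc, ← hc', mul_assoc]
  -- (A) commutation of Q (m+1) with i m
  have hA : ∀ m : ℤ, Q (m + 1) * i m = (t : R) * (i m * Q (m + 1)) := by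
    intro m
    calc Q (m + 1) * i m
        = i m * Q m * (Q (m + 1) * i m) := by rw [hiQ m, one_mul]
      _ = i m * (Q m * Q (m + 1)) * i m := by simp [mul_assoc]
      _ = i m * ((t : R) * (Q (m + 1) * Q m)) * i m := by rw [hcomm m]
      _ = (t : R) * (i m * Q (m + 1) * (Q m * i m)) := by rw [hswap]; simp [mul_assoc]
      _ = (t : R) * (i m * Q (m + 1)) := by rw [hQi m, mul_one]
  have hA' : ∀ m : ℤ, i m * Q (m + 1) = ((t⁻¹ : Rˣ) : R) * (Q (m + 1) * i m) := by
    intro m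
    rw [hA m, ← mul_assoc, htt, one_mul]
  -- (C1) commutation of i (m+1) with Q m
  have hC1 : ∀ m : ℤ, i (m + 1) * Q m = (t : R) * (Q m * i (m + 1)) := by
    intro m
    calc i (m + 1) * Q m
        = i (m + 1) * Q m * (Q (m + 1) * i (m + 1)) := by rw [hQi (m + 1), mul_one]
      _ = i (m + 1) * (Q m * Q (m + 1)) * i (m + 1) := by simp [mul_assoc]
      _ = i (m + 1) * ((t : R) * (Q (m + 1) * Q m)) * i (m + 1) := by rw [hcomm m]
      _ = (t : R) * (i (m + 1) * Q (m + 1) * (Q m * i (m + 1))) := by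
          rw [hswap]; simp [mul_assoc]
      _ = (t : R) * (Q m * i (m + 1)) := by rw [hiQ (m + 1), one_mul]
  -- (C) Q (m-1) * Q (m+1) = t * Q m ^ 2 - t⁻¹
  have hC : ∀ m : ℤ, Q (m - 1) * Q (m + 1)
      = (t : R) * Q m ^ 2 - ((t⁻¹ : Rˣ) : R) := by
    intro m
    have h1 : Q (m + 1) * Q (m - 1) = ((t⁻¹ : Rˣ) : R) * (Q m ^ 2 - 1) := by
      rw [← hsys m, ← mul_assoc, htt, one_mul]
    have ha : Q (m - 1) = ((t⁻¹ : Rˣ) : R) * (i (m + 1) * (Q m ^ 2 - 1)) := by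
      calc Q (m - 1) = i (m + 1) * (Q (m + 1) * Q (m - 1)) := by
            rw [← mul_assoc, hiQ (m + 1), one_mul]
        _ = i (m + 1) * (((t⁻¹ : Rˣ) : R) * (Q m ^ 2 - 1)) := by rw [h1]
        _ = ((t⁻¹ : Rˣ) : R) * (i (m + 1) * (Q m ^ 2 - 1)) := by rw [hswap']
    have hsq : i (m + 1) * Q m ^ 2 * Q (m + 1) = (t : R) * ((t : R) * Q m ^ 2) := by
      calc i (m + 1) * Q m ^ 2 * Q (m + 1)
          = i (m + 1) * Q m * (Q m * Q (m + 1)) := by rw [pow_two]; simp [mul_assoc]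
        _ = (t : R) * (Q m * i (m + 1)) * (Q m * Q (m + 1)) := by rw [hC1 m]
        _ = (t : R) * (Q m * (i (m + 1) * Q m) * Q (m + 1)) := by simp [mul_assoc]
        _ = (t : R) * (Q m * ((t : R) * (Q m * i (m + 1))) * Q (m + 1)) := by rw [hC1 m]
        _ = (t : R) * ((t : R) * (Q m * (Q m * (i (m + 1) * Q (m + 1))))) := by
            rw [hswap]; simp [mul_assoc]
        _ = (t : R) * ((t : R) * Q m ^ 2) := by rw [hiQ (m + 1), mul_one, pow_two]
    calc Q (m - 1) * Q (m + 1)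
        = ((t⁻¹ : Rˣ) : R) * (i (m + 1) * (Q m ^ 2 - 1)) * Q (m + 1) := by rw [ha]
      _ = ((t⁻¹ : Rˣ) : R) * (i (m + 1) * Q m ^ 2 * Q (m + 1) - i (m + 1) * Q (m + 1)) := by
          noncomm_ring
      _ = ((t⁻¹ : Rˣ) : R) * ((t : R) * ((t : R) * Q m ^ 2) - 1) := by
          rw [hsq, hiQ (m + 1)]
      _ = (t : R) * Q m ^ 2 - ((t⁻¹ : Rˣ) : R) := by
          rw [mul_sub, mul_one, ← mul_assoc, htt, one_mul]
  -- (B) Q (m+2) in terms of Q (m+1) and i m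
  have hB : ∀ m : ℤ, Q (m + 2) = ((t⁻¹ : Rˣ) : R) * ((Q (m + 1) ^ 2 - 1) * i m) := by
    intro m
    have h := hsys (m + 1)
    have e1 : m + 1 + 1 = m + 2 := by ring
    have e2 : m + 1 - 1 = m := by ring
    rw [e1, e2] at h
    calc Q (m + 2) = Q (m + 2) * (Q m * i m) := by rw [hQi m, mul_one]
      _ = ((t⁻¹ : Rˣ) : R) * ((t : R) * (Q (m + 2) * Q m)) * i m := by
          rw [← mul_assoc, ← mul_assoc, htt, one_mul]
      _ = ((t⁻¹ : Rˣ) : R) * ((Q (m + 1) ^ 2 - 1) * i m) := by rw [h, mul_assoc]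
  -- key step lemma
  have hK : ∀ m : ℤ, (Q (m + 1) + (t : R) * Q (m - 1)) * i m * Q (m + 1)
      = Q (m + 2) + (t : R) * Q m := by
    intro m
    have h1 : Q (m + 1) * i m * Q (m + 1)
        = ((t⁻¹ : Rˣ) : R) * (Q (m + 1) ^ 2 * i m) := by
      calc Q (m + 1) * i m * Q (m + 1)
          = Q (m + 1) * (i m * Q (m + 1)) := by rw [mul_assoc]
        _ = Q (m + 1) * (((t⁻¹ : Rˣ) : R) * (Q (m + 1) * i m)) := by rw [hA' m]
        _ = ((t⁻¹ : Rˣ) : R) * (Q (m + 1) ^ 2 * i m) := by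
            rw [hswap', pow_two]; simp [mul_assoc]
    have h2 : (t : R) * Q (m - 1) * i m * Q (m + 1)
        = (t : R) * Q m - ((t⁻¹ : Rˣ) : R) * i m := by
      calc (t : R) * Q (m - 1) * i m * Q (m + 1)
          = (t : R) * (Q (m - 1) * (i m * Q (m + 1))) := by simp [mul_assoc]
        _ = (t : R) * (Q (m - 1) * (((t⁻¹ : Rˣ) : R) * (Q (m + 1) * i m))) := by
            rw [hA' m]
        _ = (t : R) * (((t⁻¹ : Rˣ) : R) * (Q (m - 1) * Q (m + 1) * i m)) := by
            rw [hswap']; simp [mul_assoc]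
        _ = Q (m - 1) * Q (m + 1) * i m := by rw [← mul_assoc, htt', one_mul]
        _ = ((t : R) * Q m ^ 2 - ((t⁻¹ : Rˣ) : R)) * i m := by rw [hC m]
        _ = (t : R) * (Q m * (Q m * i m)) - ((t⁻¹ : Rˣ) : R) * i m := by
            rw [pow_two]; simp [mul_assoc, sub_mul]
        _ = (t : R) * Q m - ((t⁻¹ : Rˣ) : R) * i m := by rw [hQi m, mul_one]
    calc (Q (m + 1) + (t : R) * Q (m - 1)) * i m * Q (m + 1)
        = Q (m + 1) * i m * Q (m + 1) + (t : R) * Q (m - 1) * i m * Q (m + 1) := by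
          simp [add_mul, mul_assoc]
      _ = ((t⁻¹ : Rˣ) : R) * (Q (m + 1) ^ 2 * i m)
            + ((t : R) * Q m - ((t⁻¹ : Rˣ) : R) * i m) := by rw [h1, h2]
      _ = ((t⁻¹ : Rˣ) : R) * ((Q (m + 1) ^ 2 - 1) * i m) + (t : R) * Q m := by
          noncomm_ring
      _ = Q (m + 2) + (t : R) * Q m := by rw [← hB m]
  -- the conserved quantity
  set C : R := Q 1 * i 0 + (t : R) * (Q (-1) * i 0) with hCdef
  have main : ∀ n : ℤ, Q (n + 1) + (t : R) * Q (n - 1) = C * Q n := by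
    intro n
    induction n using Int.induction_on with
    | zero =>
        have e1 : (0 : ℤ) + 1 = 1 := by norm_num
        have e2 : (0 : ℤ) - 1 = -1 := by norm_num
        have hbase : (Q 1 * i 0 + (t : R) * (Q (-1) * i 0)) * Q 0
            = Q 1 + (t : R) * Q (-1) := by
          calc (Q 1 * i 0 + (t : R) * (Q (-1) * i 0)) * Q 0
              = Q 1 * (i 0 * Q 0) + (t : R) * (Q (-1) * (i 0 * Q 0)) := by noncomm_ring
            _ = Q 1 + (t : R) * Q (-1) := by rw [hiQ 0]; simp
        rw [e1, e2, hCdef, hbase]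
    | succ k ih =>
        have e1 : (k : ℤ) + 1 + 1 = (k : ℤ) + 2 := by ring
        have e2 : (k : ℤ) + 1 - 1 = (k : ℤ) := by ring
        rw [e1, e2]
        calc Q ((k : ℤ) + 2) + (t : R) * Q (k : ℤ)
            = (Q ((k : ℤ) + 1) + (t : R) * Q ((k : ℤ) - 1)) * i (k : ℤ) * Q ((k : ℤ) + 1) :=
              (hK (k : ℤ)).symm
          _ = C * Q (k : ℤ) * i (k : ℤ) * Q ((k : ℤ) + 1) := by rw [ih]
          _ = C * (Q (k : ℤ) * i (k : ℤ)) * Q ((k : ℤ) + 1) := by simp [mul_assoc]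
          _ = C * Q ((k : ℤ) + 1) := by rw [hQi (k : ℤ), mul_one]
    | pred k ih =>
        have e1 : -(k : ℤ) - 1 + 1 = -(k : ℤ) := by ring
        have e2 : -(k : ℤ) - 1 + 2 = -(k : ℤ) + 1 := by ring
        have e3 : -(k : ℤ) - 1 - 1 = -(k : ℤ) - 2 := by ring
        have hK' := hK (-(k : ℤ) - 1)
        rw [e1, e2, e3] at hK'
        have heq := hK'.trans ih
        have key : (Q (-(k : ℤ)) + (t : R) * Q (-(k : ℤ) - 2)) * i (-(k : ℤ) - 1) = C := by
          calc (Q (-(k : ℤ)) + (t : R) * Q (-(k : ℤ) - 2)) * i (-(k : ℤ) - 1)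
              = (Q (-(k : ℤ)) + (t : R) * Q (-(k : ℤ) - 2)) * i (-(k : ℤ) - 1)
                  * Q (-(k : ℤ)) * i (-(k : ℤ)) := by rw [mul_assoc, hQi, mul_one]
            _ = C * Q (-(k : ℤ)) * i (-(k : ℤ)) := by rw [heq]
            _ = C := by rw [mul_assoc, hQi, mul_one]
        rw [e1, e3]
        calc Q (-(k : ℤ)) + (t : R) * Q (-(k : ℤ) - 2)
            = (Q (-(k : ℤ)) + (t : R) * Q (-(k : ℤ) - 2))
                * (i (-(k : ℤ) - 1) * Q (-(k : ℤ) - 1)) := by rw [hiQ, mul_one]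
          _ = (Q (-(k : ℤ)) + (t : R) * Q (-(k : ℤ) - 2)) * i (-(k : ℤ) - 1)
                * Q (-(k : ℤ) - 1) := by rw [mul_assoc]
          _ = C * Q (-(k : ℤ) - 1) := by rw [key]
  exact main
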